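/- arXiv:2104.02161 — 4 statements merged into one kernel-verified Lean document; each statement's English description precedes it below -/
import Mathlib

section
/- Let A, B ⊆ ℝⁿ be nonempty closed sets, r* ≥ 0, γ > 0, ω ∈ [0, 2), and 0 < c < γ/2. Let b ∈ B, a⁺ ∈ P_A(b), b⁺ ∈ P_B(a⁺) with r := ‖a⁺ − b⁺‖ > r*. Assume: (i) the angle estimate (1 − cos α)/(r − r*)^ω ≥ γ holds, where α = ∠(b − a⁺, b⁺ − a⁺); and (ii) Hölder regularity at this building block: there is no b' ∈ B with ‖b' − a⁺‖ ≤ (1 + c)·r, a⁺ ∈ P_A(b'), and cos∠(b' − b⁺, a⁺ − b⁺) > √c·(r − r*)^{ω/2}. Then the three-point estimate ‖a⁺ − b⁺‖² + ℓ·‖b − b⁺‖² ≤ ‖b − a⁺‖² holds with ℓ = min{1/2, 1 − √(2c/γ), c/(2 + c)}. -/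
open Set Metric Filter Topology
open scoped RealInnerProductSpace

noncomputable section

def projSet {E : Type*} [NormedAddCommGroup E] (S : Set E) (x : E) : Set E :=
  {s | s ∈ S ∧ ‖x - s‖ = Metric.infDist x S}

def cosAngle {n : ℕ} (u v : EuclideanSpace ℝ (Fin n)) : ℝ := ⟪u, v⟫ / (‖u‖ * ‖v‖)

set_option maxHeartbeats 1000000 in
/-- Lemma 4 (three-point estimate). A building block `b → a⁺ → b⁺` with
`r = ‖a⁺ - b⁺‖ > r*` which satisfies the angle condition with constant `γ` and exponent `ω`
and the `ω/2`-Hölder regularity condition with constant `c < γ/2` satisfies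
`‖a⁺ - b⁺‖² + ℓ ‖b - b⁺‖² ≤ ‖b - a⁺‖²` with `ℓ = min {1/2, 1 - √(2c/γ), c/(2+c)}`. -/
theorem statement6 {n : ℕ} (A B : Set (EuclideanSpace ℝ (Fin n)))
    (hAne : A.Nonempty) (hAcl : IsClosed A) (hBne : B.Nonempty) (hBcl : IsClosed B)
    (rstar γ ω c : ℝ) (hrstar : 0 ≤ rstar) (hγ : 0 < γ) (hω1 : 0 ≤ ω) (hω2 : ω < 2)
    (hc1 : 0 < c) (hc2 : c < γ/2)
    (b : EuclideanSpace ℝ (Fin n)) (hb : b ∈ B)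
    (aplus : EuclideanSpace ℝ (Fin n)) (haplus : aplus ∈ projSet A b)
    (bplus : EuclideanSpace ℝ (Fin n)) (hbplus : bplus ∈ projSet B aplus)
    (hr : rstar < ‖aplus - bplus‖)
    (hangle : γ ≤ (1 - cosAngle (b - aplus) (bplus - aplus)) / (‖aplus - bplus‖ - rstar) ^ ω)
    (hholder : ¬ ∃ b' ∈ B, ‖b' - aplus‖ ≤ (1 + c) * ‖aplus - bplus‖ ∧
        aplus ∈ projSet A b' ∧
        Real.sqrt c * (‖aplus - bplus‖ - rstar) ^ (ω/2) <
          cosAngle (b' - bplus) (aplus - bplus)) :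
    ‖aplus - bplus‖^2 +
        min (min (1/2) (1 - Real.sqrt (2*c/γ))) (c/(2+c)) * ‖b - bplus‖^2
      ≤ ‖b - aplus‖^2 := by
  -- abbreviations
  set r := ‖aplus - bplus‖ with hrdef
  set R := ‖b - aplus‖ with hRdef
  set D := ‖b - bplus‖ with hDdef
  set ip := ⟪b - aplus, bplus - aplus⟫ with hipdef
  set L := min (min (1/2) (1 - Real.sqrt (2*c/γ))) (c/(2+c)) with hLdef
  have hr0 : 0 < r := lt_of_le_of_lt hrstar hr
  have hRr : r ≤ R := by
    have h1 : Metric.infDist aplus B ≤ dist aplus b := Metric.infDist_le_dist_of_mem hb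
    have h2 : dist aplus b = R := by rw [dist_eq_norm, norm_sub_rev]
    rw [hrdef, hbplus.2]; linarith
  have hR0 : 0 < R := lt_of_lt_of_le hr0 hRr
  have hD0 : 0 ≤ D := norm_nonneg _
  -- the cosine law identity
  have hDsq : D ^ 2 = R ^ 2 - 2 * ip + r ^ 2 := by
    have h : b - bplus = (b - aplus) - (bplus - aplus) := by abel
    rw [hDdef, h, norm_sub_sq_real, norm_sub_rev bplus aplus]
  -- angle condition
  have hx0 : (0:ℝ) < r - rstar := by linarith
  set s := (r - rstar) ^ ω with hsdef
  have hs0 : 0 < s := Real.rpow_pos_of_pos hx0 ω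
  set sh := (r - rstar) ^ (ω/2) with hshdef
  have hsh0 : 0 ≤ sh := (Real.rpow_pos_of_pos hx0 _).le
  have hsh2 : sh * sh = s := by
    rw [hshdef, hsdef, ← Real.rpow_add hx0]; norm_num
  have hip : ip ≤ (1 - γ * s) * (R * r) := by
    have hden : (0:ℝ) < R * r := mul_pos hR0 hr0
    have h1 : γ * s ≤ 1 - cosAngle (b - aplus) (bplus - aplus) :=
      (le_div_iff₀ hs0).mp hangle
    have h2 : cosAngle (b - aplus) (bplus - aplus) = ip / (R * r) := by
      rw [cosAngle, norm_sub_rev bplus aplus]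
    rw [h2] at h1
    have h3 : ip / (R * r) ≤ 1 - γ * s := by linarith
    calc ip = (ip / (R * r)) * (R * r) := by field_simp
    _ ≤ (1 - γ * s) * (R * r) := mul_le_mul_of_nonneg_right h3 hden.le
  rcases le_or_gt R ((1 + c) * r) with hcase | hcase
  · -- Hölder regularity case
    push_neg at hholder
    have hcos := hholder b hb hcase haplus
    rcases eq_or_lt_of_le hD0 with hDz | hDpos
    · rw [← hDz]
      nlinarith
    · -- inner product bound from the regularity
      have hipv : ⟪b - bplus, aplus - bplus⟫ = r ^ 2 - ip := by
        have h1 : b - bplus = (b - aplus) - (bplus - aplus) := by abel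
        have h2 : aplus - bplus = -(bplus - aplus) := by abel
        rw [h1, h2, inner_neg_right, inner_sub_left, hipdef,
          real_inner_self_eq_norm_sq, norm_sub_rev bplus aplus]
        ring
      have hcos2 : r ^ 2 - ip ≤ Real.sqrt c * sh * (D * r) := by
        have hden : (0:ℝ) < D * r := mul_pos hDpos hr0
        have h2 : cosAngle (b - bplus) (aplus - bplus) = (r ^ 2 - ip) / (D * r) := by
          rw [cosAngle, hipv]
        rw [h2] at hcos
        calc r ^ 2 - ip = ((r ^ 2 - ip) / (D * r)) * (D * r) := by field_simp
        _ ≤ (Real.sqrt c * sh) * (D * r) := mul_le_mul_of_nonneg_right hcos hden.le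
      -- lower bound on D
      have hD2 : 2 * γ * s * r ^ 2 ≤ D ^ 2 := by
        nlinarith [sq_nonneg (R - r), mul_pos hγ hs0, mul_nonneg (mul_nonneg hγ.le hs0.le) (mul_nonneg (sub_nonneg.mpr hRr) hr0.le)]
      -- key inequality
      set q := Real.sqrt (2 * c / γ) with hqdef
      have hq0 : 0 ≤ q := Real.sqrt_nonneg _
      have hq2 : q ^ 2 = 2 * c / γ := Real.sq_sqrt (by positivity)
      have hsc0 : 0 ≤ Real.sqrt c := Real.sqrt_nonneg _
      have hsc2 : Real.sqrt c ^ 2 = c := Real.sq_sqrt hc1.le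
      have hkey : 2 * Real.sqrt c * sh * r ≤ q * D := by
        have hcc : Real.sqrt c * Real.sqrt c = c := Real.mul_self_sqrt hc1.le
        have e1 : (2 * Real.sqrt c * sh * r) ^ 2 = 4 * c * s * r ^ 2 := by
          linear_combination (4 * (sh * sh) * r ^ 2) * hcc + (4 * c * r ^ 2) * hsh2
        have e2 : (q * D) ^ 2 = (2 * c / γ) * D ^ 2 := by rw [mul_pow, hq2]
        have e3 : (2 * c / γ) * (2 * γ * s * r ^ 2) = 4 * c * s * r ^ 2 := by
          field_simp; ring
        have e4 : (2 * c / γ) * (2 * γ * s * r ^ 2) ≤ (2 * c / γ) * D ^ 2 :=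
          mul_le_mul_of_nonneg_left hD2 (by positivity)
        have hsq : (2 * Real.sqrt c * sh * r) ^ 2 ≤ (q * D) ^ 2 := by
          rw [e1, e2]; linarith
        have h1 : 0 ≤ 2 * Real.sqrt c * sh * r := by positivity
        have h2 : 0 ≤ q * D := by positivity
        have := Real.sqrt_le_sqrt hsq
        rwa [Real.sqrt_sq h1, Real.sqrt_sq h2] at this
      have hL1 : L ≤ 1 - q := le_trans (min_le_left _ _) (min_le_right _ _)
      have hkeyD : 2 * Real.sqrt c * sh * r * D ≤ q * D ^ 2 := by
        have h := mul_le_mul_of_nonneg_right hkey hD0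
        calc 2 * Real.sqrt c * sh * r * D = 2 * Real.sqrt c * sh * r * D := rfl
        _ ≤ q * D * D := h
        _ = q * D ^ 2 := by ring
      have hLD : L * D ^ 2 ≤ (1 - q) * D ^ 2 :=
        mul_le_mul_of_nonneg_right hL1 (sq_nonneg D)
      have hcos2' : 2 * (r ^ 2 - ip) ≤ 2 * Real.sqrt c * sh * r * D := by
        have : Real.sqrt c * sh * (D * r) = Real.sqrt c * sh * D * r := by ring
        nlinarith [hcos2]
      nlinarith [hcos2', hkeyD, hLD, hDsq]
  · -- far case
    have hL2 : L ≤ c / (2 + c) := min_le_right _ _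
    have hDle : D ≤ R + r := by
      have h : b - bplus = (b - aplus) + (aplus - bplus) := by abel
      calc D = ‖(b - aplus) + (aplus - bplus)‖ := by rw [hDdef, h]
      _ ≤ R + r := norm_add_le _ _
    have hDsq' : D ^ 2 ≤ (R + r) ^ 2 := by nlinarith
    have hLD : L * D ^ 2 ≤ (c / (2 + c)) * D ^ 2 :=
      mul_le_mul_of_nonneg_right hL2 (sq_nonneg D)
    have hfar : (1 + c) * r ≤ R := hcase.le
    have hc0 : (0:ℝ) ≤ c / (2 + c) := by positivity
    have h2c : (0:ℝ) < 2 + c := by linarith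
    have step2 : (c / (2 + c)) * D ^ 2 ≤ (c / (2 + c)) * (R + r) ^ 2 :=
      mul_le_mul_of_nonneg_left hDsq' hc0
    have hexp : (2 + c) * (r ^ 2 + (c / (2 + c)) * (R + r) ^ 2)
        = (2 + c) * r ^ 2 + c * (R + r) ^ 2 := by
      field_simp
    have h3 : (2 + c) * (r ^ 2 + (c / (2 + c)) * (R + r) ^ 2) ≤ (2 + c) * R ^ 2 := by
      rw [hexp]
      nlinarith [mul_nonneg (sub_nonneg.mpr hfar) (by positivity : (0:ℝ) ≤ R + r)]
    have h3' : r ^ 2 + (c / (2 + c)) * (R + r) ^ 2 ≤ R ^ 2 :=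
      (mul_le_mul_iff_right₀ h2c).mp h3
    linarith
end
end

section
/- Let A, B ⊆ ℝⁿ be nonempty closed sets and ℓ > 0. Let a ∈ A, b ∈ P_B(a), a⁺ ∈ P_A(b), b⁺ ∈ P_B(a⁺), and assume the three-point estimate ‖a⁺ − b⁺‖² + ℓ·‖b − b⁺‖² ≤ ‖b − a⁺‖² holds. Then the four-point estimate d_B(a)² − d_B(a⁺)² ≥ ℓ·‖b − b⁺‖² holds. -/
open Set Metric Filter Topology
open scoped RealInnerProductSpace

noncomputable section

/-- the three-point estimate implies the four-point estimate
`d_B(a)² - d_B(a⁺)² ≥ ℓ ‖b - b⁺‖²` for a block `a → b → a⁺ → b⁺`. -/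
theorem statement7 {n : ℕ} (A B : Set (EuclideanSpace ℝ (Fin n)))
    (hAne : A.Nonempty) (hAcl : IsClosed A) (hBne : B.Nonempty) (hBcl : IsClosed B)
    (ℓ : ℝ) (hℓ : 0 < ℓ)
    (a : EuclideanSpace ℝ (Fin n)) (ha : a ∈ A)
    (b : EuclideanSpace ℝ (Fin n)) (hb : b ∈ projSet B a)
    (aplus : EuclideanSpace ℝ (Fin n)) (haplus : aplus ∈ projSet A b)
    (bplus : EuclideanSpace ℝ (Fin n)) (hbplus : bplus ∈ projSet B aplus)
    (hthree : ‖aplus - bplus‖^2 + ℓ * ‖b - bplus‖^2 ≤ ‖b - aplus‖^2) :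
    ℓ * ‖b - bplus‖^2 ≤ (infDist a B)^2 - (infDist aplus B)^2 := by
  obtain ⟨hbB, hbd⟩ := hb
  obtain ⟨haA, had⟩ := haplus
  obtain ⟨hbpB, hbpd⟩ := hbplus
  have h1 : ‖b - aplus‖ ≤ infDist a B := by
    rw [← hbd, had]
    calc infDist b A ≤ dist b a := infDist_le_dist_of_mem ha
    _ = ‖a - b‖ := by rw [dist_eq_norm, ← norm_neg, neg_sub]
  have h2 : ‖b - aplus‖ ^ 2 ≤ (infDist a B) ^ 2 :=
    pow_le_pow_left₀ (norm_nonneg _) h1 2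
  rw [← hbpd]
  nlinarith
end
end

section
/- Let A, B ⊆ ℝⁿ be nonempty closed sets and (a_k, b_k) a bounded alternating sequence between A and B with gap (A*, B*, r*) and augmented sets A^s, B^s. Suppose there exists ℓ > 0 such that the four-point estimate d_B(a_k)² − d_B(a_{k+1})² ≥ ℓ·‖b_k − b_{k+1}‖² holds for all k, and suppose the gap satisfies the angle condition with some constant γ > 0 and some exponent ω ∈ [0, 2) with respect to A^s, B^s. Then (b_k) converges to some b* ∈ B, and there exists ρ > 0 with ‖b_k − b*‖ = O(k^{−ρ}). -/
open Set Metric Filter Topology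
open scoped RealInnerProductSpace

noncomputable section

/-- The proximal normal cone `N_A^p(a) = {λ u : λ ≥ 0, a ∈ P_A(a+u)}`. -/
def proxNormalCone {E : Type*} [NormedAddCommGroup E] [Module ℝ E] (A : Set E) (a : E) :
    Set E :=
  {v | ∃ lam : ℝ, 0 ≤ lam ∧ ∃ u : E, a ∈ projSet A (a + u) ∧ v = lam • u}

/-- A gap `(A*, B*, r*)` between `A` and `B`. -/
def IsGap {n : ℕ} (A B Astar Bstar : Set (EuclideanSpace ℝ (Fin n))) (rstar : ℝ) : Prop :=
  Astar ⊆ A ∧ Bstar ⊆ B ∧ 0 ≤ rstar ∧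
  (∀ astar ∈ Astar, ∃ bstar ∈ Bstar, bstar ∈ projSet B astar ∧ ‖astar - bstar‖ = rstar) ∧
  (∀ bstar ∈ Bstar, ∃ astar ∈ Astar, astar ∈ projSet A bstar ∧ ‖astar - bstar‖ = rstar)

/-- The angle condition with constant `γ` and exponent `ω` for the gap `(A*, B*, r*)`:
every prox-building block `b →p a⁺ → b⁺` with `a⁺` near `A*`, `b⁺` near `B*` and
`r = ‖a⁺ - b⁺‖ > r*` satisfies `(1 - cos α)/(r - r*)^ω ≥ γ`, `α = ∠(b - a⁺, b⁺ - a⁺)`. -/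
def AngleCond {n : ℕ} (A B Astar Bstar : Set (EuclideanSpace ℝ (Fin n)))
    (rstar γ ω : ℝ) : Prop :=
  ∃ U V : Set (EuclideanSpace ℝ (Fin n)), IsOpen U ∧ Bstar ⊆ U ∧ IsOpen V ∧ Astar ⊆ V ∧
    ∀ b ∈ B, ∀ aplus ∈ A, b - aplus ∈ proxNormalCone A aplus →
      ∀ bplus ∈ projSet B aplus, aplus ∈ V → bplus ∈ U → rstar < ‖aplus - bplus‖ →
      γ ≤ (1 - cosAngle (b - aplus) (bplus - aplus)) / (‖aplus - bplus‖ - rstar) ^ ω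

/-- The gap `(A*, B*, r*)` is `σ`-Hölder regular with constant `c`. -/
def HolderRegularGap {n : ℕ} (A B Astar : Set (EuclideanSpace ℝ (Fin n)))
    (rstar c σ : ℝ) : Prop :=
  ∃ V : Set (EuclideanSpace ℝ (Fin n)), IsOpen V ∧ Astar ⊆ V ∧ ∃ η > (0:ℝ),
    ∀ b ∈ B, ∀ aplus ∈ projSet A b, ∀ bplus ∈ projSet B aplus,
      aplus ∈ V → rstar < ‖aplus - bplus‖ → ‖aplus - bplus‖ < rstar + η →
      ¬ ∃ b' ∈ B, ‖b' - aplus‖ ≤ (1 + c) * ‖aplus - bplus‖ ∧ aplus ∈ projSet A b' ∧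
        Real.sqrt c * (‖aplus - bplus‖ - rstar) ^ σ < cosAngle (b' - bplus) (aplus - bplus)

/-- The gap is saturated: for every neighborhood `V` of `A*` there is a neighborhood `U` of
`B*` with `P_A(b) ⊆ V` for all `b ∈ B ∩ U`. -/
def SaturatedGap {n : ℕ} (A B Astar Bstar : Set (EuclideanSpace ℝ (Fin n))) : Prop :=
  ∀ V : Set (EuclideanSpace ℝ (Fin n)), IsOpen V → Astar ⊆ V →
    ∃ U : Set (EuclideanSpace ℝ (Fin n)), IsOpen U ∧ Bstar ⊆ U ∧
      ∀ b ∈ B ∩ U, projSet A b ⊆ V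

/-- An alternating sequence of projections between `A` and `B`. -/
def IsAltSeq {n : ℕ} (A B : Set (EuclideanSpace ℝ (Fin n)))
    (a b : ℕ → EuclideanSpace ℝ (Fin n)) : Prop :=
  (∀ k, a k ∈ A) ∧ (∀ k, b k ∈ projSet B (a k)) ∧ (∀ k, a (k+1) ∈ projSet A (b k))

/-- The alternating sequence reaches the `δ`-neighborhood of the gap `(A*, B*, r*)`. -/
def ReachesGap {n : ℕ} (Astar Bstar : Set (EuclideanSpace ℝ (Fin n))) (rstar δ : ℝ)
    (a b : ℕ → EuclideanSpace ℝ (Fin n)) : Prop :=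
  ∃ k : ℕ, infDist (b k) Bstar ≤ δ ∧ infDist (a (k+1)) Astar ≤ δ ∧
    rstar < ‖a k - b k‖ ∧ ‖a k - b k‖ < rstar + δ

/-- The set of accumulation points of a sequence. -/
def accPts {n : ℕ} (u : ℕ → EuclideanSpace ℝ (Fin n)) : Set (EuclideanSpace ℝ (Fin n)) :=
  {x | ∃ φ : ℕ → ℕ, StrictMono φ ∧ Tendsto (u ∘ φ) atTop (𝓝 x)}


lemma aux_bern {v w P : ℝ} (hv : 0 < v) (hvw : v ≤ w) (hP : 1 < P) :
    (P - 1) * w ^ (-P) * (w - v) ≤ v ^ (1 - P) - w ^ (1 - P) := by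
  have hw : 0 < w := lt_of_lt_of_le hv hvw
  have hs0 : (0:ℝ) ≤ w / v - 1 := by
    rw [sub_nonneg, le_div_iff₀ hv, one_mul]; exact hvw
  have hb := one_add_mul_self_le_rpow_one_add (by linarith : (-1:ℝ) ≤ w / v - 1) hP.le
  have e1 : (1:ℝ) + (w / v - 1) = w / v := by ring
  rw [e1] at hb
  have e2 : (w / v : ℝ) ^ P = w ^ P / v ^ P := Real.div_rpow hw.le hv.le P
  rw [e2] at hb
  have hAv : (0:ℝ) < v ^ P := Real.rpow_pos_of_pos hv P
  have hBw : (0:ℝ) < w ^ P := Real.rpow_pos_of_pos hw P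
  have hv1 : v ^ (1 - P) = v * (v ^ P)⁻¹ := by
    rw [show (1:ℝ) - P = 1 + (-P) by ring, Real.rpow_add hv, Real.rpow_one,
      Real.rpow_neg hv.le]
  have hw1 : w ^ (1 - P) = w * (w ^ P)⁻¹ := by
    rw [show (1:ℝ) - P = 1 + (-P) by ring, Real.rpow_add hw, Real.rpow_one,
      Real.rpow_neg hw.le]
  have hw2 : w ^ (-P) = (w ^ P)⁻¹ := Real.rpow_neg hw.le P
  rw [hv1, hw1, hw2]
  -- from hb : 1 + P * (w/v - 1) ≤ w^P / v^P
  have hb' : (v + P * (w - v)) * v ^ P ≤ v * w ^ P := by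
    have h := mul_le_mul_of_nonneg_right hb (le_of_lt (mul_pos hAv hv))
    calc (v + P * (w - v)) * v ^ P = (1 + P * (w / v - 1)) * (v ^ P * v) := by
          field_simp
      _ ≤ w ^ P / v ^ P * (v ^ P * v) := h
      _ = v * w ^ P := by field_simp
  have key : (P - 1) * (w - v) * v ^ P ≤ v * w ^ P - w * v ^ P := by nlinarith
  have e3 : (P - 1) * (w ^ P)⁻¹ * (w - v) = (P - 1) * (w - v) * v ^ P / (v ^ P * w ^ P) := by
    field_simp
  have e4 : v * (v ^ P)⁻¹ - w * (w ^ P)⁻¹ = (v * w ^ P - w * v ^ P) / (v ^ P * w ^ P) := by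
    field_simp
  rw [e3, e4]
  gcongr


lemma aux_accPts_subset {n : ℕ} {x : ℕ → EuclideanSpace ℝ (Fin n)}
    {A : Set (EuclideanSpace ℝ (Fin n))} (hA : IsClosed A) (hx : ∀ k, x k ∈ A) :
    accPts x ⊆ A := by
  rintro l ⟨φ, hφ, hlim⟩
  exact hA.mem_of_tendsto hlim (Eventually.of_forall fun n => hx _)

lemma aux_eventually_mem {n : ℕ} {x : ℕ → EuclideanSpace ℝ (Fin n)} {M : ℝ}
    (hM : ∀ k, ‖x k‖ ≤ M) {V : Set (EuclideanSpace ℝ (Fin n))} (hV : IsOpen V)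
    (hsub : accPts x ⊆ V) : ∀ᶠ k in atTop, x k ∈ V := by
  by_contra h
  rw [Filter.not_eventually] at h
  obtain ⟨φ, hφ, hφmem⟩ := Filter.extraction_of_frequently_atTop h
  have hb : Bornology.IsBounded (Set.range x) := by
    rw [isBounded_iff_forall_norm_le]
    exact ⟨M, by rintro y ⟨k, rfl⟩; exact hM k⟩
  obtain ⟨l, -, ψ, hψ, hlim⟩ := tendsto_subseq_of_bounded hb
    (fun m => Set.mem_range_self (φ m) : ∀ m, (x ∘ φ) m ∈ Set.range x)
  have hl : l ∈ accPts x := ⟨φ ∘ ψ, hφ.comp hψ, hlim⟩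
  have hlc : l ∈ Vᶜ := hV.isClosed_compl.mem_of_tendsto hlim
    (Eventually.of_forall fun m => hφmem (ψ m))
  exact hlc (hsub hl)

lemma aux_tele (u : ℕ → ℝ) {k m : ℕ} (h : k ≤ m) :
    ∑ j ∈ Finset.Ico k m, (u j - u (j+1)) = u k - u m := by
  induction m, h using Nat.le_induction with
  | base => simp
  | succ m hm ih => rw [Finset.sum_Ico_succ_top hm, ih]; ring

lemma aux_rate (u : ℕ → ℝ) (c P : ℝ) (K : ℕ) (hc : 0 < c) (hP1 : 1 < P) (hP2 : P < 2)
    (hpos : ∀ k, 0 < u k) (hmono : ∀ k, u (k+1) ≤ u k)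
    (hrec : ∀ j, K ≤ j → c * u (j+1) ^ P ≤ u j - u (j+1)) :
    ∃ C m : ℝ, 0 < C ∧ 1 < m ∧ ∀ k : ℕ, 2*(K+1) ≤ k → u k ≤ C * (k:ℝ) ^ (-m) := by
  have h2P : (0:ℝ) < 2 ^ (P-1) - 1 := by
    have : (2:ℝ) ^ (0:ℝ) < 2 ^ (P-1) :=
      Real.rpow_lt_rpow_of_exponent_lt one_lt_two (by linarith)
    rw [Real.rpow_zero] at this; linarith
  set c₁ : ℝ := min ((P-1)*c/4) ((2 ^ (P-1) - 1) * u K ^ (1-P)) with hc₁def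
  have hyKpos : 0 < u K ^ (1-P) := Real.rpow_pos_of_pos (hpos K) _
  have hc₁ : 0 < c₁ := lt_min (by nlinarith) (by positivity)
  have main : ∀ i : ℕ, u K ^ (1-P) + c₁ * i ≤ u (K+i) ^ (1-P) := by
    intro i
    induction i with
    | zero => simp
    | succ i ih =>
      set j := K + i with hj
      have hyK_le : u K ^ (1-P) ≤ u j ^ (1-P) := by
        have : (0:ℝ) ≤ c₁ * i := by positivity
        linarith
      have hrecj := hrec j (Nat.le_add_right K i)
      have hstep : u j ^ (1-P) + c₁ ≤ u (j+1) ^ (1-P) := by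
        by_cases hhalf : u j ≤ 2 * u (j+1)
        · have hb := aux_bern (hpos (j+1)) (hmono j) hP1
          have h2 : (P-1) * u j ^ (-P) * (c * u (j+1) ^ P)
              ≤ (P-1) * u j ^ (-P) * (u j - u (j+1)) := by
            exact mul_le_mul_of_nonneg_left hrecj (mul_nonneg (by linarith) (Real.rpow_nonneg (hpos j).le _))
          have h3 : u j ^ (-P) * u (j+1) ^ P = (u (j+1) / u j) ^ P := by
            rw [Real.div_rpow (hpos (j+1)).le (hpos j).le, Real.rpow_neg (hpos j).le,
              div_eq_mul_inv]; ring
          have h4 : ((1:ℝ)/2) ^ P ≤ (u (j+1) / u j) ^ P := by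
            apply Real.rpow_le_rpow (by norm_num) ?_ (by linarith)
            rw [div_le_div_iff₀ two_pos (hpos j)]; linarith
          have h5 : (1:ℝ)/4 ≤ ((1:ℝ)/2) ^ P := by
            have h6 : ((1:ℝ)/2)^(2:ℝ) ≤ ((1:ℝ)/2) ^ P :=
              Real.rpow_le_rpow_of_exponent_ge (by norm_num) (by norm_num) hP2.le
            have e : ((1:ℝ)/2)^(2:ℝ) = 1/4 := by
              rw [show (2:ℝ) = ((2:ℕ):ℝ) by norm_num, Real.rpow_natCast]; norm_num
            linarith
          have h7 : c₁ ≤ (P-1) * c * ((u (j+1) / u j) ^ P) := by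
            have := min_le_left ((P-1)*c/4) ((2 ^ (P-1) - 1) * u K ^ (1-P))
            nlinarith
          nlinarith [h2, hb]
        · have ha : u (j+1) ≤ u j / 2 := by linarith
          have h1 : (u j / 2) ^ (1-P) ≤ u (j+1) ^ (1-P) :=
            Real.rpow_le_rpow_of_nonpos (hpos (j+1)) ha (by linarith)
          have h2 : (u j / 2)^(1-P) = 2^(P-1) * u j ^(1-P) := by
            rw [Real.div_rpow (hpos j).le (by norm_num : (0:ℝ) ≤ 2), div_eq_mul_inv,
              ← Real.rpow_neg (by norm_num : (0:ℝ) ≤ 2), neg_sub]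
            ring
          have h8 : c₁ ≤ (2 ^ (P-1) - 1) * u j ^ (1-P) := by
            have := min_le_right ((P-1)*c/4) ((2 ^ (P-1) - 1) * u K ^ (1-P))
            nlinarith
          nlinarith
      have : K + (i+1) = j + 1 := by omega
      rw [this]
      push_cast
      linarith
  set m : ℝ := 1/(P-1) with hm
  have hm1 : 1 < m := by
    rw [hm, lt_div_iff₀ (by linarith : (0:ℝ) < P - 1)]; linarith
  refine ⟨(c₁/2) ^ (-m), m, Real.rpow_pos_of_pos (by positivity) _, hm1, ?_⟩
  intro k hk
  have hkK : K ≤ k := by omega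
  have hkr : (0:ℝ) < (k:ℝ) := by
    have : 0 < k := by omega
    exact_mod_cast this
  have hmain := main (k - K)
  have hcast : ((k - K : ℕ):ℝ) = (k:ℝ) - K := by
    rw [Nat.cast_sub hkK]
  rw [show K + (k - K) = k by omega, hcast] at hmain
  have hhalf : (k:ℝ)/2 ≤ (k:ℝ) - K := by
    have h2K : (2*K:ℝ) ≤ k := by exact_mod_cast (by omega : 2*K ≤ k)
    linarith
  have hz : (0:ℝ) < c₁/2 * k := by positivity
  have hzle : c₁/2 * (k:ℝ) ≤ u k ^ (1-P) := by nlinarith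
  have hinv : (u k ^ (1-P)) ^ (-m) ≤ (c₁/2 * (k:ℝ)) ^ (-m) :=
    Real.rpow_le_rpow_of_nonpos hz hzle (by linarith)
  have hid : (u k ^ (1-P)) ^ (-m) = u k := by
    rw [← Real.rpow_mul (hpos k).le]
    have hPne : P - 1 ≠ 0 := by linarith
    have : (1-P) * (-m) = 1 := by
      rw [hm]; field_simp; ring
    rw [this, Real.rpow_one]
  have hsplit : (c₁/2 * (k:ℝ)) ^ (-m) = (c₁/2) ^ (-m) * (k:ℝ) ^ (-m) :=
    Real.mul_rpow (by positivity) hkr.le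
  rw [hid, hsplit] at hinv
  exact hinv
set_option maxHeartbeats 1000000 in
/-- Corollary 7. If a bounded alternating sequence satisfies the four-point
estimate with some `ℓ > 0` and its gap satisfies the angle condition with respect to the
augmented sets `A^s, B^s`, then `b_k → b* ∈ B` with speed `O(k^{-ρ})` for some `ρ > 0`. -/
theorem statement13 {n : ℕ} (A B : Set (EuclideanSpace ℝ (Fin n)))
    (hAne : A.Nonempty) (hAcl : IsClosed A) (hBne : B.Nonempty) (hBcl : IsClosed B)
    (a b : ℕ → EuclideanSpace ℝ (Fin n))
    (hseq : IsAltSeq A B a b)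
    (hbdd : ∃ M : ℝ, ∀ k, ‖a k‖ ≤ M ∧ ‖b k‖ ≤ M)
    (ℓ : ℝ) (hℓ : 0 < ℓ)
    (hfour : ∀ k, ℓ * ‖b k - b (k+1)‖^2 ≤ (infDist (a k) B)^2 - (infDist (a (k+1)) B)^2)
    (γ ω : ℝ) (hγ : 0 < γ) (hω1 : 0 ≤ ω) (hω2 : ω < 2)
    (hangle : AngleCond (Set.range a ∪ accPts a) (Set.range b ∪ accPts b)
      (accPts a) (accPts b) (⨅ k, ‖a k - b k‖) γ ω) :
    ∃ bstar ∈ B, Tendsto b atTop (𝓝 bstar) ∧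
      ∃ ρ : ℝ, 0 < ρ ∧ ∃ C : ℝ, ∀ k : ℕ, 1 ≤ k →
        ‖b k - bstar‖ ≤ C * (k : ℝ) ^ (-ρ) := by
  obtain ⟨hA, hBproj, hAproj⟩ := hseq
  obtain ⟨M, hM⟩ := hbdd
  have hM0 : 0 ≤ M := le_trans (norm_nonneg _) (hM 0).2
  set r : ℕ → ℝ := fun k => ‖a k - b k‖ with hrdef
  set rs : ℝ := ⨅ k, ‖a k - b k‖ with hrsdef
  have hbB : ∀ k, b k ∈ B := fun k => (hBproj k).1
  have hrB : ∀ k, infDist (a k) B = r k := fun k => ((hBproj k).2).symm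
  have hbdd0 : BddBelow (Set.range fun k => ‖a k - b k‖) :=
    ⟨0, by rintro x ⟨k, rfl⟩; exact norm_nonneg _⟩
  have hrs_le : ∀ k, rs ≤ r k := fun k => ciInf_le hbdd0 k
  have hrs0 : 0 ≤ rs := le_ciInf fun k => norm_nonneg _
  have hrpos : ∀ k, 0 ≤ r k := fun k => norm_nonneg _
  have hsA : ∀ k, ‖b k - a (k+1)‖ = infDist (b k) A := fun k => (hAproj k).2
  have hmono : ∀ k, r (k+1) ≤ r k := by
    intro k
    have h1 : infDist (a (k+1)) B ≤ dist (a (k+1)) (b k) := infDist_le_dist_of_mem (hbB k)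
    have h2 : infDist (b k) A ≤ dist (b k) (a k) := infDist_le_dist_of_mem (hA k)
    have e1 : dist (a (k+1)) (b k) = ‖b k - a (k+1)‖ := by
      rw [dist_eq_norm, norm_sub_rev]
    have e2 : dist (b k) (a k) = r k := by rw [dist_eq_norm, norm_sub_rev]
    calc r (k+1) = infDist (a (k+1)) B := (hrB _).symm
      _ ≤ ‖b k - a (k+1)‖ := by rw [← e1]; exact h1
      _ = infDist (b k) A := hsA k
      _ ≤ r k := by rw [← e2]; exact h2
  have hmono' : ∀ j k, j ≤ k → r k ≤ r j := by
    intro j k h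
    induction k, h using Nat.le_induction with
    | base => exact le_refl _
    | succ k hk ih => exact (hmono k).trans ih
  set u : ℕ → ℝ := fun k => r k^2 - rs^2 with hudef
  have humono : ∀ k, u (k+1) ≤ u k := by
    intro k
    have h1 := hmono k
    have h2 := hrpos (k+1)
    simp only [hudef]
    nlinarith
  have hfour' : ∀ k, ℓ * ‖b k - b (k+1)‖^2 ≤ u k - u (k+1) := by
    intro k
    have h := hfour k
    rw [hrB k, hrB (k+1)] at h
    simp only [hudef]
    linarith
  have hu0 : ∀ k, 0 ≤ u k := by
    intro k
    have := hrs_le k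
    simp only [hudef]
    nlinarith
  by_cases hcase : ∀ k, rs < r k
  case neg =>
    push_neg at hcase
    obtain ⟨m0, hm0⟩ := hcase
    have hreq : ∀ j, m0 ≤ j → r j = rs := fun j hj =>
      le_antisymm ((hmono' m0 j hj).trans hm0) (hrs_le j)
    have hbconst : ∀ j, m0 ≤ j → b j = b m0 := by
      intro j hj
      induction j, hj using Nat.le_induction with
      | base => rfl
      | succ j hj ih =>
        have h := hfour' j
        have e : u j - u (j+1) = 0 := by
          simp only [hudef]
          rw [hreq j hj, hreq (j+1) (by omega)]
          ring
        have hsq : ‖b j - b (j+1)‖^2 ≤ 0 := by nlinarith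
        have hn : ‖b j - b (j+1)‖ = 0 := by nlinarith [norm_nonneg (b j - b (j+1))]
        have : b j = b (j+1) := by
          rwa [norm_sub_eq_zero_iff] at hn
        rw [← this, ih]
    refine ⟨b m0, hbB m0, ?_, 1, one_pos, (2*M+1) * ((m0:ℝ)+1), ?_⟩
    · apply Tendsto.congr' ?_ (tendsto_const_nhds (x := b m0))
      filter_upwards [eventually_ge_atTop m0] with j hj
      exact (hbconst j hj).symm
    · intro k hk
      have hkpos : (0:ℝ) < k := by exact_mod_cast hk
      have hne : (k:ℝ) ^ (-(1:ℝ)) = ((k:ℝ))⁻¹ := Real.rpow_neg_one _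
      rw [hne]
      by_cases hkm : m0 ≤ k
      · rw [hbconst k hkm]
        simp only [sub_self, norm_zero]
        positivity
      · have h1 : ‖b k - b m0‖ ≤ 2*M := by
          calc ‖b k - b m0‖ ≤ ‖b k‖ + ‖b m0‖ := norm_sub_le _ _
            _ ≤ 2*M := by have := (hM k).2; have := (hM m0).2; linarith
        have hkm' : (k:ℝ) ≤ m0 := by exact_mod_cast (by omega : k ≤ m0)
        have h2 : 2*M ≤ (2*M+1) * ((m0:ℝ)+1) * (k:ℝ)⁻¹ := by
          rw [← div_eq_mul_inv, le_div_iff₀ hkpos]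
          nlinarith
        linarith
  case pos =>
    have hupos : ∀ k, 0 < u k := by
      intro k
      have := hcase k
      simp only [hudef]
      nlinarith
    obtain ⟨U, V, hUo, hBU, hVo, hAV, hkey⟩ := hangle
    have hVev := aux_eventually_mem (fun k => (hM k).1) hVo hAV
    have hUev := aux_eventually_mem (fun k => (hM k).2) hUo hBU
    obtain ⟨N, hN⟩ := eventually_atTop.mp (hVev.and hUev)
    have hsubA : (Set.range a ∪ accPts a) ⊆ A :=
      Set.union_subset (by rintro z ⟨k, rfl⟩; exact hA k) (aux_accPts_subset hAcl hA)
    have hsubB : (Set.range b ∪ accPts b) ⊆ B :=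
      Set.union_subset (by rintro z ⟨k, rfl⟩; exact hbB k) (aux_accPts_subset hBcl hbB)
    have hAsne : (Set.range a ∪ accPts a).Nonempty := ⟨a 0, Or.inl ⟨0, rfl⟩⟩
    have hBsne : (Set.range b ∪ accPts b).Nonempty := ⟨b 0, Or.inl ⟨0, rfl⟩⟩
    have hstep : ∀ j, N ≤ j+1 →
        2*ℓ*γ * (r (j+1))^2 * (r (j+1) - rs) ^ ω ≤ u j - u (j+1) := by
      intro j hj
      obtain ⟨haV, hbU⟩ := hN (j+1) hj
      set x := b j - a (j+1) with hxdef
      set y := b (j+1) - a (j+1) with hydef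
      have hrpnorm : ‖y‖ = r (j+1) := by rw [hydef, norm_sub_rev]
      have htp : 0 < r (j+1) - rs := sub_pos.2 (hcase (j+1))
      have hrp : 0 < r (j+1) := by linarith
      have hs_ge : r (j+1) ≤ ‖x‖ := by
        calc r (j+1) = infDist (a (j+1)) B := (hrB _).symm
          _ ≤ dist (a (j+1)) (b j) := infDist_le_dist_of_mem (hbB j)
          _ = ‖x‖ := by rw [dist_eq_norm, norm_sub_rev]
      have hspos : 0 < ‖x‖ := lt_of_lt_of_le hrp hs_ge
      have hmemA : a (j+1) ∈ Set.range a ∪ accPts a := Or.inl ⟨j+1, rfl⟩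
      have hmemBj : b j ∈ Set.range b ∪ accPts b := Or.inl ⟨j, rfl⟩
      have hprojAs : a (j+1) ∈ projSet (Set.range a ∪ accPts a) (b j) := by
        refine ⟨hmemA, le_antisymm ?_ ?_⟩
        · rw [hsA j]
          exact infDist_le_infDist_of_subset hsubA hAsne
        · rw [← dist_eq_norm]
          exact infDist_le_dist_of_mem hmemA
      have hprox : b j - a (j+1) ∈ proxNormalCone (Set.range a ∪ accPts a) (a (j+1)) := by
        refine ⟨1, zero_le_one, b j - a (j+1), ?_, (one_smul ℝ _).symm⟩
        have e : a (j+1) + (b j - a (j+1)) = b j := by abel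
        rw [e]; exact hprojAs
      have hprojBs : b (j+1) ∈ projSet (Set.range b ∪ accPts b) (a (j+1)) := by
        refine ⟨Or.inl ⟨j+1, rfl⟩, le_antisymm ?_ ?_⟩
        · rw [(hBproj (j+1)).2]
          exact infDist_le_infDist_of_subset hsubB hBsne
        · rw [← dist_eq_norm]
          exact infDist_le_dist_of_mem (Or.inl ⟨j+1, rfl⟩)
      have hgap : rs < ‖a (j+1) - b (j+1)‖ := hcase (j+1)
      have hkey' := hkey (b j) hmemBj (a (j+1)) hmemA hprox (b (j+1)) hprojBs haV hbU hgap
      have hrw : ‖a (j+1) - b (j+1)‖ = r (j+1) := rfl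
      rw [hrw] at hkey'
      have hpow : 0 < (r (j+1) - rs) ^ ω := Real.rpow_pos_of_pos htp ω
      have hcos : γ * (r (j+1) - rs) ^ ω ≤ 1 - cosAngle x y := (le_div_iff₀ hpow).mp hkey'
      have hxne : ‖x‖ ≠ 0 := ne_of_gt hspos
      have hyne : ‖y‖ ≠ 0 := by rw [hrpnorm]; exact ne_of_gt hrp
      have hip : ⟪x, y⟫ = cosAngle x y * (‖x‖ * ‖y‖) := by
        unfold cosAngle
        field_simp
      have hnormeq : ‖x - y‖^2 = ‖x‖^2 - 2*⟪x,y⟫ + ‖y‖^2 := norm_sub_sq_real x y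
      have hxy : b j - b (j+1) = x - y := by rw [hxdef, hydef]; abel
      have hΔ : 2*‖x‖*‖y‖*(1 - cosAngle x y) ≤ ‖x - y‖^2 := by
        nlinarith [sq_nonneg (‖x‖ - ‖y‖)]
      have h1cos : 0 < 1 - cosAngle x y := lt_of_lt_of_le (mul_pos hγ hpow) hcos
      have h2 : 2*(r (j+1))^2 * (γ * (r (j+1) - rs) ^ ω) ≤ ‖x - y‖^2 := by
        have hA1 : 2*‖x‖*‖y‖*(γ * (r (j+1) - rs) ^ ω) ≤ 2*‖x‖*‖y‖*(1 - cosAngle x y) := by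
          apply mul_le_mul_of_nonneg_left hcos
          positivity
        have hA2 : 2*(r (j+1))^2 * (γ * (r (j+1) - rs) ^ ω)
            ≤ 2*‖x‖*‖y‖*(γ * (r (j+1) - rs) ^ ω) := by
          apply mul_le_mul_of_nonneg_right ?_ (mul_pos hγ hpow).le
          rw [hrpnorm]
          nlinarith
        linarith
      have h3 := hfour' j
      rw [hxy] at h3
      calc 2*ℓ*γ*(r (j+1))^2 * (r (j+1) - rs) ^ ω
          = ℓ * (2*(r (j+1))^2 * (γ * (r (j+1) - rs)^ω)) := by ring
        _ ≤ ℓ * ‖x - y‖^2 := mul_le_mul_of_nonneg_left h2 hℓ.le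
        _ ≤ u j - u (j+1) := h3
    set T : ℝ := max 1 (r 0) with hTdef
    have hT1 : (1:ℝ) ≤ T := le_max_left _ _
    have hT0 : (0:ℝ) < T := by linarith
    have hrT : ∀ k, r k ≤ T := fun k => (hmono' 0 k (Nat.zero_le k)).trans (le_max_right _ _)
    set P : ℝ := (ω+6)/4 with hPdef
    have hP1 : 1 < P := by rw [hPdef]; linarith
    have hP2 : P < 2 := by rw [hPdef]; linarith
    set ee : ℝ := (2-ω)/2 with heedef
    have hee0 : 0 ≤ ee := by rw [heedef]; linarith
    have hTe : 0 < T ^ ee := Real.rpow_pos_of_pos hT0 ee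
    have hrec : ∀ j, N ≤ j → (2*ℓ*γ/(4 * T^ee)) * u (j+1) ^ P ≤ u j - u (j+1) := by
      intro j hj
      have hstepj := hstep j (by omega)
      set t := r (j+1) - rs with htdef
      have htp : 0 < t := sub_pos.2 (hcase (j+1))
      have hrp : 0 < r (j+1) := by linarith [hrs0]
      have htr : t ≤ r (j+1) := by rw [htdef]; linarith [hrs0]
      have hub : u (j+1) ≤ 2 * t * r (j+1) := by
        simp only [hudef, htdef]
        nlinarith [hrs_le (j+1)]
      have h1 : u (j+1) ^ P ≤ (2*t*r (j+1)) ^ P :=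
        Real.rpow_le_rpow (hu0 _) hub (by linarith)
      have h2 : (2*t*r (j+1)) ^ P = 2^P * t^P * (r (j+1))^P := by
        rw [Real.mul_rpow (by positivity) hrp.le, Real.mul_rpow (by norm_num) htp.le]
      have h3 : (2:ℝ)^P ≤ 4 := by
        have h3a : (2:ℝ)^P ≤ 2^(2:ℝ) := Real.rpow_le_rpow_of_exponent_le one_le_two hP2.le
        have h3b : (2:ℝ)^(2:ℝ) = 4 := by
          rw [show (2:ℝ) = ((2:ℕ):ℝ) from by norm_num]
          rw [Real.rpow_natCast]
          norm_num
        linarith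
      have h4 : t^P = t^ω * t^(P-ω) := by
        rw [← Real.rpow_add htp]; ring_nf
      have h5 : (r (j+1))^P = (r (j+1))^(2:ℝ) * (r (j+1))^(P-2) := by
        rw [← Real.rpow_add hrp]; ring_nf
      have h6 : (r (j+1))^(P-2) ≤ t^(P-2) :=
        Real.rpow_le_rpow_of_nonpos htp htr (by linarith)
      have h7 : t^(P-ω) * t^(P-2) = t^ee := by
        rw [← Real.rpow_add htp]
        congr 1
        rw [hPdef, heedef]; ring
      have h8 : t^ee ≤ T^ee := Real.rpow_le_rpow htp.le (htr.trans (hrT (j+1))) hee0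
      have h9 : (r (j+1))^(2:ℝ) = (r (j+1))^2 := by
        rw [show (2:ℝ) = ((2:ℕ):ℝ) from by norm_num, Real.rpow_natCast]
      have h10 : u (j+1)^P ≤ 4 * T^ee * ((r (j+1))^2 * t^ω) := by
        have hx1 : (0:ℝ) ≤ (r (j+1))^(2:ℝ) * t^ω := by positivity
        have hx2 : (0:ℝ) ≤ t^(P-ω) := by positivity
        have hx3 : (0:ℝ) ≤ t^(P-2) := by positivity
        calc u (j+1)^P ≤ 2^P * t^P * (r (j+1))^P := h2 ▸ h1
          _ = (2^P) * ((r (j+1))^(2:ℝ) * t^ω) * (t^(P-ω) * (r (j+1))^(P-2)) := by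
              rw [h4, h5]; ring
          _ ≤ 4 * ((r (j+1))^(2:ℝ) * t^ω) * (t^(P-ω) * t^(P-2)) := by
              apply mul_le_mul (mul_le_mul_of_nonneg_right h3 hx1) ?_ ?_ (by positivity)
              · exact mul_le_mul_of_nonneg_left h6 hx2
              · positivity
          _ = 4 * ((r (j+1))^(2:ℝ) * t^ω) * t^ee := by rw [h7]
          _ ≤ 4 * ((r (j+1))^(2:ℝ) * t^ω) * T^ee := by
              apply mul_le_mul_of_nonneg_left h8 (by positivity)
          _ = 4 * T^ee * ((r (j+1))^2 * t^ω) := by rw [h9]; ring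
      have hcpos : (0:ℝ) < 2*ℓ*γ/(4 * T^ee) := by positivity
      calc (2*ℓ*γ/(4 * T^ee)) * u (j+1) ^ P
          ≤ (2*ℓ*γ/(4 * T^ee)) * (4 * T^ee * ((r (j+1))^2 * t^ω)) :=
            mul_le_mul_of_nonneg_left h10 hcpos.le
        _ = 2*ℓ*γ * (r (j+1))^2 * t^ω := by
            field_simp
        _ ≤ u j - u (j+1) := hstepj
    obtain ⟨C5, m, hC5, hm1, hC5bd⟩ := aux_rate u (2*ℓ*γ/(4*T^ee)) P N
      (by positivity) hP1 hP2 hupos humono hrec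
    set ρ : ℝ := (m-1)/2 with hρdef
    have hρpos : 0 < ρ := by rw [hρdef]; linarith
    set K₀ : ℕ := 2*(N+1) with hK₀def
    have hK₀1 : 1 ≤ K₀ := by omega
    set B₀ : ℝ := Real.sqrt (C5/ℓ) with hB₀def
    have hB₀0 : 0 ≤ B₀ := Real.sqrt_nonneg _
    have hblock : ∀ k m', K₀ ≤ k → k ≤ m' → m' ≤ 2*k →
        dist (b k) (b m') ≤ B₀ * (k:ℝ)^(-ρ) := by
      intro k m' hk hkm hm2
      have hkr : (0:ℝ) < k := by
        have : 0 < k := by omega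
        exact_mod_cast this
      have h1 : dist (b k) (b m') ≤ ∑ j ∈ Finset.Ico k m', dist (b j) (b (j+1)) :=
        dist_le_Ico_sum_dist b hkm
      set S := ∑ j ∈ Finset.Ico k m', dist (b j) (b (j+1)) with hSdef
      have hS0 : 0 ≤ S := Finset.sum_nonneg fun _ _ => dist_nonneg
      have h2 : S^2 ≤ (Finset.Ico k m').card * ∑ j ∈ Finset.Ico k m', dist (b j) (b (j+1))^2 :=
        sq_sum_le_card_mul_sum_sq
      have h3 : ∑ j ∈ Finset.Ico k m', dist (b j) (b (j+1))^2 ≤ (u k - u m')/ℓ := by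
        have hterm : ∀ j ∈ Finset.Ico k m', dist (b j) (b (j+1))^2 ≤ (u j - u (j+1))/ℓ := by
          intro j _
          have h := hfour' j
          rw [le_div_iff₀ hℓ, dist_eq_norm]
          linarith
        calc ∑ j ∈ Finset.Ico k m', dist (b j) (b (j+1))^2
            ≤ ∑ j ∈ Finset.Ico k m', (u j - u (j+1))/ℓ := Finset.sum_le_sum hterm
          _ = (u k - u m')/ℓ := by rw [← Finset.sum_div, aux_tele u hkm]
      have hsumsq0 : (0:ℝ) ≤ ∑ j ∈ Finset.Ico k m', dist (b j) (b (j+1))^2 :=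
        Finset.sum_nonneg fun _ _ => sq_nonneg _
      have hcard : ((Finset.Ico k m').card : ℝ) ≤ (k:ℝ) := by
        rw [Nat.card_Ico]
        exact_mod_cast (by omega : m' - k ≤ k)
      have h4 : S^2 ≤ (k:ℝ) * (u k/ℓ) := by
        have hum' : 0 ≤ u m' := hu0 m'
        have hx : ((Finset.Ico k m').card : ℝ) * (∑ j ∈ Finset.Ico k m', dist (b j) (b (j+1))^2)
            ≤ (k:ℝ) * ((u k - u m')/ℓ) :=
          mul_le_mul hcard h3 hsumsq0 hkr.le
        have hy : (k:ℝ) * ((u k - u m')/ℓ) ≤ (k:ℝ) * (u k/ℓ) := by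
          apply mul_le_mul_of_nonneg_left ?_ hkr.le
          exact (div_le_div_iff_of_pos_right hℓ).mpr (by linarith)
        linarith [h2]
      have h6 := hC5bd k (by omega)
      have h7 : S^2 ≤ (C5/ℓ) * ((k:ℝ) * (k:ℝ)^(-m)) := by
        have hq : u k/ℓ ≤ C5 * (k:ℝ)^(-m)/ℓ := (div_le_div_iff_of_pos_right hℓ).mpr h6
        have := mul_le_mul_of_nonneg_left hq hkr.le
        calc S^2 ≤ (k:ℝ) * (u k/ℓ) := h4
          _ ≤ (k:ℝ) * (C5 * (k:ℝ)^(-m)/ℓ) := this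
          _ = (C5/ℓ) * ((k:ℝ) * (k:ℝ)^(-m)) := by ring
      have h8 : (k:ℝ) * (k:ℝ)^(-m) = (k:ℝ)^((1:ℝ)-m) := by
        rw [show (1:ℝ)-m = 1 + (-m) from by ring, Real.rpow_add hkr, Real.rpow_one]
      have h9 : S ≤ Real.sqrt ((C5/ℓ) * (k:ℝ)^((1:ℝ)-m)) := by
        rw [← h8]
        exact (Real.le_sqrt hS0 (by positivity)).mpr h7
      have h10 : Real.sqrt ((C5/ℓ) * (k:ℝ)^((1:ℝ)-m)) = B₀ * (k:ℝ)^(-ρ) := by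
        rw [Real.sqrt_mul (by positivity) _, hB₀def]
        congr 1
        rw [Real.sqrt_eq_rpow, ← Real.rpow_mul hkr.le]
        congr 1
        rw [hρdef]; ring
      calc dist (b k) (b m') ≤ S := h1
        _ ≤ Real.sqrt ((C5/ℓ) * (k:ℝ)^((1:ℝ)-m)) := h9
        _ = B₀ * (k:ℝ)^(-ρ) := h10
    have h2ρ : (2:ℝ)^(-ρ) < 1 := Real.rpow_lt_one_of_one_lt_of_neg one_lt_two (by linarith)
    have h2ρ0 : (0:ℝ) ≤ (2:ℝ)^(-ρ) := Real.rpow_nonneg (by norm_num) _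
    set E : ℝ := B₀ / (1 - 2^(-ρ)) with hEdef
    have hden : (0:ℝ) < 1 - 2^(-ρ) := by linarith
    have hEeq : B₀ + E * 2^(-ρ) = E := by
      rw [hEdef]
      field_simp
      ring
    have hE0 : 0 ≤ E := div_nonneg hB₀0 hden.le
    have hBE : B₀ ≤ E := by nlinarith
    have hind : ∀ d k m', K₀ ≤ k → k ≤ m' → m' - k ≤ d →
        dist (b k) (b m') ≤ E * (k:ℝ)^(-ρ) := by
      intro d
      induction d with
      | zero =>
        intro k m' hk hkm hd
        have : m' = k := by omega
        subst this
        simp only [dist_self]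
        positivity
      | succ d ih =>
        intro k m' hk hkm hd
        have hkρ : (0:ℝ) ≤ (k:ℝ)^(-ρ) := Real.rpow_nonneg (by positivity) _
        by_cases h2k : m' ≤ 2*k
        · exact (hblock k m' hk hkm h2k).trans (mul_le_mul_of_nonneg_right hBE hkρ)
        · push_neg at h2k
          have hk1 : 1 ≤ k := le_trans hK₀1 hk
          have hstep1 := hblock k (2*k) hk (by omega) (le_refl _)
          have hih := ih (2*k) m' (by omega) (by omega) (by omega)
          have htri := dist_triangle (b k) (b (2*k)) (b m')
          have hcast : ((2*k : ℕ):ℝ) = 2*(k:ℝ) := by push_cast; ring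
          have hsplit : ((2*k:ℕ):ℝ)^(-ρ) = 2^(-ρ) * (k:ℝ)^(-ρ) := by
            rw [hcast, Real.mul_rpow (by norm_num) (by positivity)]
          rw [hsplit] at hih
          calc dist (b k) (b m') ≤ B₀*(k:ℝ)^(-ρ) + E*(2^(-ρ)*(k:ℝ)^(-ρ)) := by linarith
            _ = (B₀ + E*2^(-ρ)) * (k:ℝ)^(-ρ) := by ring
            _ = E * (k:ℝ)^(-ρ) := by rw [hEeq]
    have hdist : ∀ k m', K₀ ≤ k → k ≤ m' → dist (b k) (b m') ≤ E * (k:ℝ)^(-ρ) :=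
      fun k m' hk hkm => hind (m'-k) k m' hk hkm (le_refl _)
    have htend : Tendsto (fun k : ℕ => E * (k:ℝ)^(-ρ)) atTop (𝓝 0) := by
      have h1 : Tendsto (fun k : ℕ => ((k:ℝ))^(-ρ)) atTop (𝓝 0) :=
        (tendsto_rpow_neg_atTop hρpos).comp tendsto_natCast_atTop_atTop
      simpa using h1.const_mul E
    have hcauchy : CauchySeq b := by
      rw [Metric.cauchySeq_iff']
      intro ε hε
      obtain ⟨N', hN'⟩ := eventually_atTop.mp
        ((htend.eventually (gt_mem_nhds hε)).and (eventually_ge_atTop K₀))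
      refine ⟨N', fun n hn => ?_⟩
      obtain ⟨hsmall, hKN⟩ := hN' N' (le_refl _)
      calc dist (b n) (b N') = dist (b N') (b n) := dist_comm _ _
        _ ≤ E * (N':ℝ)^(-ρ) := hdist N' n hKN hn
        _ < ε := hsmall
    obtain ⟨bstar, hbstar⟩ := cauchySeq_tendsto_of_complete hcauchy
    have hbstarB : bstar ∈ B := hBcl.mem_of_tendsto hbstar (Eventually.of_forall hbB)
    have hbs_bound : ‖bstar‖ ≤ M :=
      le_of_tendsto hbstar.norm (Eventually.of_forall fun k => (hM k).2)
    have hlimb : ∀ k, K₀ ≤ k → ‖b k - bstar‖ ≤ E * (k:ℝ)^(-ρ) := by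
      intro k hk
      have h1 : Tendsto (fun m' => dist (b k) (b m')) atTop (𝓝 (dist (b k) bstar)) :=
        tendsto_const_nhds.dist hbstar
      rw [← dist_eq_norm]
      exact le_of_tendsto h1 (eventually_atTop.mpr ⟨k, fun m' hm' => hdist k m' hk hm'⟩)
    have hKpos : (0:ℝ) < (K₀:ℝ) := by
      have : 0 < K₀ := by omega
      exact_mod_cast this
    have hKρ : (0:ℝ) ≤ (K₀:ℝ)^ρ := Real.rpow_nonneg hKpos.le _
    refine ⟨bstar, hbstarB, hbstar, ρ, hρpos, E + (2*M+1) * (K₀:ℝ)^ρ, ?_⟩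
    intro k hk
    have hkr : (0:ℝ) < k := by exact_mod_cast hk
    have hrpow0 : (0:ℝ) ≤ (k:ℝ)^(-ρ) := Real.rpow_nonneg hkr.le _
    by_cases hkK : K₀ ≤ k
    · have h1 := hlimb k hkK
      have h2 : E * (k:ℝ)^(-ρ) ≤ (E + (2*M+1)*(K₀:ℝ)^ρ)*(k:ℝ)^(-ρ) := by
        apply mul_le_mul_of_nonneg_right ?_ hrpow0
        nlinarith
      linarith
    · push_neg at hkK
      have h1 : ‖b k - bstar‖ ≤ 2*M := by
        calc ‖b k - bstar‖ ≤ ‖b k‖ + ‖bstar‖ := norm_sub_le _ _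
          _ ≤ 2*M := by have := (hM k).2; linarith
      have h2 : (K₀:ℝ)^(-ρ) ≤ (k:ℝ)^(-ρ) :=
        Real.rpow_le_rpow_of_nonpos hkr (by exact_mod_cast hkK.le) (by linarith)
      have h3 : (K₀:ℝ)^ρ * (K₀:ℝ)^(-ρ) = 1 := by
        rw [← Real.rpow_add hKpos]
        simp
      have h4 : (2*M+1) ≤ (2*M+1) * ((K₀:ℝ)^ρ * (k:ℝ)^(-ρ)) := by
        have h5 : (1:ℝ) ≤ (K₀:ℝ)^ρ * (k:ℝ)^(-ρ) := by
          calc (1:ℝ) = (K₀:ℝ)^ρ * (K₀:ℝ)^(-ρ) := h3.symm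
            _ ≤ (K₀:ℝ)^ρ * (k:ℝ)^(-ρ) := mul_le_mul_of_nonneg_left h2 hKρ
        nlinarith
      have h6 : (0:ℝ) ≤ E * (k:ℝ)^(-ρ) := mul_nonneg hE0 hrpow0
      calc ‖b k - bstar‖ ≤ 2*M := h1
        _ ≤ (2*M+1) * ((K₀:ℝ)^ρ * (k:ℝ)^(-ρ)) := by linarith
        _ ≤ (E + (2*M+1)*(K₀:ℝ)^ρ)*(k:ℝ)^(-ρ) := by
            have := h6
            nlinarith [hKρ, hrpow0]
end
end

section
/- (Reach of the magnitude torus.) Let N ≥ 1, m : Fin N → ℝ with m(ω) > 0 for all ω, ‖m‖ = (Σ_ω m(ω)²)^{1/2}, and T = {y ∈ ℂ^N : |y(ω)| = m(ω) for all ω} ⊆ ℂ^N with the Euclidean norm. Let y ∈ T, let ε : Fin N → {−1, +1}, and let d ∈ ℂ^N be the unit vector with d(ω) = ε(ω)·y(ω)/‖m‖. Then: (i) for every R with 0 ≤ R < ‖m‖, y is the unique nearest point of T to y + R·d, i.e. P_T(y + R·d) = {y}; (ii) if ε(ω) = +1 for all ω, then P_T(y + R·d) = {y} for every R ≥ 0,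 so the reach R(y, d) = sup{R ≥ 0 : P_T(y + R·d) = {y}} is +∞; (iii) if ε(ω₀) = −1 for some ω₀, then the point y + ‖m‖·d has more than one nearest point in T, and R(y, d) = ‖m‖. -/
open Set Metric Filter Topology

noncomputable section

/-- The reach of `S` at `b` along a unit direction `d`:
`R(b,d) = sup {R ≥ 0 : P_S(b + R d) = {b}}`, as an extended real number. -/
def dirReach {E : Type*} [NormedAddCommGroup E] [Module ℝ E]
    (S : Set E) (b d : E) : EReal :=
  sSup (Real.toEReal '' {R : ℝ | 0 ≤ R ∧ projSet S (b + R • d) = {b}})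

/-- The Fourier magnitude set `T = {y ∈ ℂ^N : |y(ω)| = m(ω) for all ω}`. -/
def magSet (N : ℕ) (m : Fin N → ℝ) : Set (EuclideanSpace ℂ (Fin N)) :=
  {y | ∀ ω, ‖y ω‖ = m ω}

namespace S15

/-- Equality case of the reverse triangle inequality on ℂ. -/
theorem circ_eq (c w : ℂ) (hc : c ≠ 0)
    (h : ‖c - w‖ = |‖c‖ - ‖w‖|) :
    w = ((‖w‖ / ‖c‖ : ℝ) : ℂ) * c := by
  have h2 : ‖c - w‖ ^ 2 = (‖c‖ - ‖w‖)^2 := by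
    rw [h, _root_.sq_abs]
  rw [Complex.sq_norm, Complex.normSq_sub] at h2
  have hre : (c * (starRingEnd ℂ) w).re = ‖c‖ * ‖w‖ := by
    rw [← Complex.sq_norm c, ← Complex.sq_norm w] at h2; nlinarith
  have habs : ‖c * (starRingEnd ℂ) w‖ = ‖c‖ * ‖w‖ := by
    simp [norm_mul]
  set u := c * (starRingEnd ℂ) w with hu
  have him : u.im = 0 := by
    have h3 : u.re^2 = ‖u‖ ^2 := by rw [hre, habs]
    rw [Complex.sq_norm, Complex.normSq_apply] at h3
    nlinarith [sq_nonneg u.im]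
  have hueq : u = ((‖c‖ * ‖w‖ : ℝ) : ℂ) := by
    apply Complex.ext <;> simp [hre, him]
  have h3 : (starRingEnd ℂ) c * w = ((‖c‖ * ‖w‖ : ℝ) : ℂ) := by
    have := congrArg (starRingEnd ℂ) hueq
    simpa [hu, mul_comm] using this
  have hcc : (starRingEnd ℂ) c ≠ 0 := by simpa using hc
  have hac : (‖c‖ : ℝ) ≠ 0 := by simpa using hc
  have hmc : c * (starRingEnd ℂ) c = ((‖c‖ ^2 : ℝ) : ℂ) := by
    rw [Complex.sq_norm, Complex.mul_conj]
  refine mul_left_cancel₀ hcc ?_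
  rw [h3, show (starRingEnd ℂ) c * (((‖w‖ / ‖c‖ : ℝ) : ℂ) * c)
      = ((‖w‖ / ‖c‖ : ℝ) : ℂ) * (c * (starRingEnd ℂ) c) by ring, hmc]
  have hac' : ((‖c‖ : ℝ) : ℂ) ≠ 0 := by exact_mod_cast hac
  push_cast
  field_simp

variable {N : ℕ} {m : Fin N → ℝ}

/-- Coordinatewise distance lower bound quantity. -/
def dd (m : Fin N → ℝ) (x : EuclideanSpace ℂ (Fin N)) : ℝ :=
  Real.sqrt (∑ ω, (‖x ω‖ - m ω)^2)

theorem norm_sub_eq (x z : EuclideanSpace ℂ (Fin N)) :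
    ‖x - z‖ = Real.sqrt (∑ ω, (‖x ω - z ω‖)^2) := by
  rw [EuclideanSpace.norm_eq]
  simp_rw [PiLp.sub_apply]

/-- The explicit nearest point. -/
def near (m : Fin N → ℝ) (x : EuclideanSpace ℂ (Fin N)) : EuclideanSpace ℂ (Fin N) :=
  (WithLp.equiv 2 (Fin N → ℂ)).symm fun ω =>
    if x ω = 0 then (m ω : ℂ) else ((m ω / ‖x ω‖ : ℝ) : ℂ) * x ω

theorem near_coord (hm : ∀ ω, 0 < m ω) (x : EuclideanSpace ℂ (Fin N)) (ω : Fin N) :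
    ‖x ω - near m x ω‖ = |‖x ω‖ - m ω| := by
  rw [near, WithLp.equiv_symm_apply]; simp only [PiLp.toLp_apply]
  split_ifs with h
  · simp [h, abs_of_pos (hm ω), abs_of_nonneg (hm ω).le]
  · have ha : ‖x ω‖ ≠ 0 := by simpa using h
    have : x ω - ((m ω / ‖x ω‖ : ℝ) : ℂ) * x ω
        = ((1 - m ω / ‖x ω‖ : ℝ) : ℂ) * x ω := by push_cast; ring
    rw [this, norm_mul, Complex.norm_real, Real.norm_eq_abs]
    rw [abs_sub_comm (‖x ω‖) (m ω)]
    rw [show m ω - ‖x ω‖ = (m ω / ‖x ω‖ - 1) * ‖x ω‖ by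
      field_simp]
    rw [abs_mul, abs_of_nonneg (norm_nonneg _), ← abs_neg (m ω / ‖x ω‖ - 1)]
    ring_nf

theorem near_mem (hm : ∀ ω, 0 < m ω) (x : EuclideanSpace ℂ (Fin N)) :
    near m x ∈ magSet N m := by
  intro ω
  rw [near, WithLp.equiv_symm_apply]; simp only [PiLp.toLp_apply]
  split_ifs with h
  · simp [abs_of_pos (hm ω)]
  · have ha : ‖x ω‖ ≠ 0 := by simpa using h
    rw [norm_mul, Complex.norm_real, Real.norm_eq_abs, abs_div, abs_of_pos (hm ω),
      abs_of_nonneg (norm_nonneg _)]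
    field_simp

theorem infDist_eq (hm : ∀ ω, 0 < m ω) (x : EuclideanSpace ℂ (Fin N)) :
    Metric.infDist x (magSet N m) = dd m x := by
  have hne : (magSet N m).Nonempty := ⟨near m x, near_mem hm x⟩
  refine le_antisymm ?_ ?_
  · calc Metric.infDist x (magSet N m) ≤ dist x (near m x) :=
          Metric.infDist_le_dist_of_mem (near_mem hm x)
      _ = dd m x := by
          rw [dist_eq_norm, norm_sub_eq, dd]
          congr 1
          exact Finset.sum_congr rfl fun ω _ => by rw [near_coord hm x ω, _root_.sq_abs]
  · rw [← not_lt, Metric.infDist_lt_iff hne]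
    rintro ⟨z, hz, hlt⟩
    rw [dist_eq_norm, norm_sub_eq] at hlt
    refine absurd hlt (not_lt.mpr ?_)
    rw [dd]
    apply Real.sqrt_le_sqrt
    refine Finset.sum_le_sum fun ω _ => ?_
    have h1 : |‖x ω‖ - m ω| ≤ ‖x ω - z ω‖ := by
      rw [← hz ω]; exact abs_norm_sub_norm_le _ _
    calc (‖x ω‖ - m ω)^2 = |‖x ω‖ - m ω|^2 := (_root_.sq_abs _).symm
      _ ≤ (‖x ω - z ω‖)^2 := by
          exact pow_le_pow_left₀ (abs_nonneg _) h1 2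

theorem mem_projSet_iff (hm : ∀ ω, 0 < m ω) (x z : EuclideanSpace ℂ (Fin N)) :
    z ∈ projSet (magSet N m) x ↔
      z ∈ magSet N m ∧ ∀ ω, ‖x ω - z ω‖ = |‖x ω‖ - m ω| := by
  rw [projSet, Set.mem_setOf_eq, infDist_eq hm]
  refine and_congr_right fun hz => ?_
  rw [norm_sub_eq, dd,
    Real.sqrt_inj (Finset.sum_nonneg fun ω _ => sq_nonneg _)
      (Finset.sum_nonneg fun ω _ => sq_nonneg _)]
  have hle : ∀ ω ∈ Finset.univ, (‖x ω‖ - m ω)^2 ≤ (‖x ω - z ω‖)^2 := by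
    intro ω _
    have h1 : |‖x ω‖ - m ω| ≤ ‖x ω - z ω‖ := by
      rw [← hz ω]; exact abs_norm_sub_norm_le _ _
    calc (‖x ω‖ - m ω)^2 = |‖x ω‖ - m ω|^2 := (_root_.sq_abs _).symm
      _ ≤ _ := pow_le_pow_left₀ (abs_nonneg _) h1 2
  rw [eq_comm, Finset.sum_eq_sum_iff_of_le hle]
  constructor
  · intro h ω
    have := (h ω (Finset.mem_univ ω)).symm
    rw [← _root_.sq_abs (‖x ω‖ - m ω)] at this
    exact (sq_eq_sq₀ (norm_nonneg _) (abs_nonneg _)).mp this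
  · intro h ω _
    rw [h ω, _root_.sq_abs]

theorem proj_eq_singleton (hm : ∀ ω, 0 < m ω) (y : EuclideanSpace ℂ (Fin N))
    (hy : y ∈ magSet N m) (t : Fin N → ℝ) (ht : ∀ ω, 0 < t ω)
    (x : EuclideanSpace ℂ (Fin N)) (hx : ∀ ω, x ω = ((t ω : ℝ) : ℂ) * y ω) :
    projSet (magSet N m) x = {y} := by
  have hyω : ∀ ω, y ω ≠ 0 := by
    intro ω h
    have := hy ω
    rw [h, norm_zero] at this
    exact (hm ω).ne this
  have habsx : ∀ ω, ‖x ω‖ = t ω * m ω := by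
    intro ω
    rw [hx ω, norm_mul, Complex.norm_real, Real.norm_eq_abs, abs_of_pos (ht ω), hy ω]
  ext z
  rw [mem_projSet_iff hm, Set.mem_singleton_iff]
  constructor
  · rintro ⟨hz, hcoord⟩
    ext ω
    have hxω : x ω ≠ 0 := by
      rw [hx ω]
      refine mul_ne_zero ?_ (hyω ω)
      simpa using (ht ω).ne'
    have hcoord' : ‖x ω - z ω‖ = |‖x ω‖ - ‖z ω‖| := by
      rw [hcoord ω, hz ω]
    have hzeq := circ_eq (x ω) (z ω) hxω hcoord'
    rw [hzeq, hz ω, habsx ω, hx ω]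
    have htne : (t ω : ℂ) ≠ 0 := by exact_mod_cast (ht ω).ne'
    have hmne : m ω ≠ 0 := (hm ω).ne'
    rw [show m ω / (t ω * m ω) = (t ω)⁻¹ by rw [eq_comm, inv_eq_iff_eq_inv, inv_div]; field_simp]
    push_cast
    field_simp
  · rintro rfl
    refine ⟨hy, fun ω => ?_⟩
    have : x ω - z ω = ((t ω - 1 : ℝ) : ℂ) * z ω := by rw [hx ω]; push_cast; ring
    rw [this, norm_mul, Complex.norm_real, Real.norm_eq_abs, hy ω, habsx ω]
    rw [show t ω * m ω - m ω = (t ω - 1) * m ω by ring, abs_mul, abs_of_pos (hm ω)]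

theorem sSup_image_Ico (ρ : ℝ) (hρ : 0 < ρ) :
    sSup (Real.toEReal '' Set.Ico 0 ρ) = (ρ : EReal) := by
  refine le_antisymm (sSup_le ?_) ?_
  · rintro b ⟨R, ⟨h0, hR⟩, rfl⟩
    exact_mod_cast hR.le
  · rw [le_sSup_iff]
    intro b hb
    by_contra hb2
    push_neg at hb2
    have h0 : (0 : EReal) ≤ b := hb ⟨0, ⟨le_refl (0:ℝ), hρ⟩, rfl⟩
    have hbt : b ≠ ⊤ := ne_top_of_lt hb2
    have hbb : b ≠ ⊥ := by
      intro h; rw [h] at h0; exact absurd h0 (by simp)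
    lift b to ℝ using ⟨hbt, hbb⟩
    have hb0 : (0 : ℝ) ≤ b := by exact_mod_cast h0
    have hbρ : b < ρ := by exact_mod_cast hb2
    have hmem : ((b + ρ) / 2 : ℝ) ∈ Set.Ico (0:ℝ) ρ := ⟨by linarith, by linarith⟩
    have := hb ⟨(b + ρ) / 2, hmem, rfl⟩
    rw [EReal.coe_le_coe_iff] at this
    linarith

theorem sSup_image_Ici : sSup (Real.toEReal '' Set.Ici (0:ℝ)) = (⊤ : EReal) := by
  rw [sSup_eq_top]
  intro b hb
  induction b using EReal.rec with
  | bot => exact ⟨((0:ℝ) : EReal), ⟨0, le_refl (0:ℝ), rfl⟩, by simp⟩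
  | coe r =>
      refine ⟨((max 0 r + 1 : ℝ) : EReal), ⟨max 0 r + 1,
        by have := le_max_left 0 r; simp only [Set.mem_Ici]; linarith, rfl⟩, ?_⟩
      rw [EReal.coe_lt_coe_iff]
      have := le_max_right 0 r
      linarith
  | top => exact absurd hb (lt_irrefl _)

end S15

/-- reach of the magnitude torus. For `y ∈ T`, signs `ε(ω) = ±1` and the unit
normal `d(ω) = ε(ω)·y(ω)/‖m‖`: (i) `P_T(y + R·d) = {y}` for `0 ≤ R < ‖m‖`; (ii) if all
signs are `+1` then `P_T(y + R·d) = {y}` for all `R ≥ 0` and the reach is `+∞`; (iii) if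
some sign is `-1` then `y + ‖m‖·d` has more than one nearest point in `T` and the reach is
`‖m‖`. -/
theorem statement15 (N : ℕ) (hN : 1 ≤ N) (m : Fin N → ℝ) (hm : ∀ ω, 0 < m ω)
    (y : EuclideanSpace ℂ (Fin N)) (hy : y ∈ magSet N m)
    (ε : Fin N → ℝ) (hε : ∀ ω, ε ω = 1 ∨ ε ω = -1)
    (normm : ℝ) (hnormm : normm = Real.sqrt (∑ ω, (m ω)^2))
    (d : EuclideanSpace ℂ (Fin N))
    (hd : d = (WithLp.equiv 2 (Fin N → ℂ)).symm
      (fun ω => ((ε ω / normm : ℝ) : ℂ) * y ω)) :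
    (∀ R : ℝ, 0 ≤ R → R < normm → projSet (magSet N m) (y + R • d) = {y}) ∧
    ((∀ ω, ε ω = 1) →
      (∀ R : ℝ, 0 ≤ R → projSet (magSet N m) (y + R • d) = {y}) ∧
      dirReach (magSet N m) y d = ⊤) ∧
    ((∃ ω₀, ε ω₀ = -1) →
      (∃ z₁ z₂ : EuclideanSpace ℂ (Fin N),
        z₁ ∈ projSet (magSet N m) (y + normm • d) ∧
        z₂ ∈ projSet (magSet N m) (y + normm • d) ∧ z₁ ≠ z₂) ∧
      dirReach (magSet N m) y d = ((normm : ℝ) : EReal)) := by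
  have hρ : 0 < normm := by
    rw [hnormm]
    apply Real.sqrt_pos.mpr
    have : Nonempty (Fin N) := Fin.pos_iff_nonempty.mp (by omega)
    exact Finset.sum_pos (fun ω _ => pow_pos (hm ω) 2) Finset.univ_nonempty
  have hcoord : ∀ (R : ℝ) (ω : Fin N),
      (y + R • d) ω = ((1 + R * ε ω / normm : ℝ) : ℂ) * y ω := by
    intro R ω
    rw [PiLp.add_apply, PiLp.smul_apply, hd, WithLp.equiv_symm_apply]
    simp only [PiLp.toLp_apply]
    rw [Complex.real_smul]
    push_cast
    ring
  have habsε : ∀ ω, |ε ω| = 1 := fun ω => by rcases hε ω with h|h <;> simp [h]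
  have hyne : ∀ ω, y ω ≠ 0 := by
    intro ω h
    have := hy ω
    rw [h, norm_zero] at this
    exact (hm ω).ne this
  have key : ∀ R : ℝ, (∀ ω, 0 < 1 + R * ε ω / normm) →
      projSet (magSet N m) (y + R • d) = {y} := fun R ht =>
    S15.proj_eq_singleton hm y hy _ ht _ (hcoord R)
  have part1 : ∀ R : ℝ, 0 ≤ R → R < normm → projSet (magSet N m) (y + R • d) = {y} := by
    intro R h0 hR
    apply key R
    intro ω
    have hRρ : R / normm < 1 := (div_lt_one hρ).mpr hR
    have hRρ0 : 0 ≤ R / normm := div_nonneg h0 hρ.le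
    rcases hε ω with h|h <;> rw [h]
    · rw [show R * 1 / normm = R / normm by ring]; linarith
    · rw [show R * (-1) / normm = -(R / normm) by ring]; linarith
  refine ⟨part1, ?_, ?_⟩
  · intro hall
    have hallR : ∀ R : ℝ, 0 ≤ R → projSet (magSet N m) (y + R • d) = {y} := by
      intro R h0
      apply key R
      intro ω
      rw [hall ω, show R * 1 / normm = R / normm by ring]
      have : 0 ≤ R / normm := div_nonneg h0 hρ.le
      linarith
    refine ⟨hallR, ?_⟩
    rw [dirReach]
    have hset : {R : ℝ | 0 ≤ R ∧ projSet (magSet N m) (y + R • d) = {y}} = Set.Ici 0 := by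
      ext R
      simp only [Set.mem_setOf_eq, Set.mem_Ici]
      exact ⟨fun h => h.1, fun h => ⟨h, hallR R h⟩⟩
    rw [hset, S15.sSup_image_Ici]
  · rintro ⟨ω₀, hω₀⟩
    have hx : ∀ ω, (y + normm • d) ω = ((1 + ε ω : ℝ) : ℂ) * y ω := by
      intro ω
      rw [hcoord normm ω, show (1 + normm * ε ω / normm : ℝ) = 1 + ε ω by field_simp]
    have habsx : ∀ ω, ‖(y + normm • d) ω‖ = |1 + ε ω| * m ω := by
      intro ω
      rw [hx ω, norm_mul, Complex.norm_real, Real.norm_eq_abs, hy ω]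
    have hy_mem : y ∈ projSet (magSet N m) (y + normm • d) := by
      rw [S15.mem_projSet_iff hm]
      refine ⟨hy, fun ω => ?_⟩
      have h1 : (y + normm • d) ω - y ω = ((ε ω : ℝ) : ℂ) * y ω := by
        rw [hx ω]; push_cast; ring
      rw [h1, norm_mul, Complex.norm_real, Real.norm_eq_abs, habsε ω, one_mul, hy ω, habsx ω]
      rcases hε ω with h|h <;> rw [h] <;> norm_num
      · rw [show (2:ℝ) * m ω - m ω = m ω by ring, abs_of_pos (hm ω)]
      · rw [abs_of_pos (hm ω)]
    set z₂ : EuclideanSpace ℂ (Fin N) := (WithLp.equiv 2 (Fin N → ℂ)).symm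
      (fun ω => if ω = ω₀ then -y ω else y ω) with hz₂def
    have hz₂coord : ∀ ω, z₂ ω = if ω = ω₀ then -y ω else y ω := fun ω => by
      rw [hz₂def, WithLp.equiv_symm_apply]
    have hz₂memT : z₂ ∈ magSet N m := by
      intro ω
      rw [hz₂coord ω]
      split_ifs <;> simp [hy ω]
    have hz₂_mem : z₂ ∈ projSet (magSet N m) (y + normm • d) := by
      rw [S15.mem_projSet_iff hm]
      refine ⟨hz₂memT, fun ω => ?_⟩
      rw [hz₂coord ω]
      split_ifs with hcase
      · subst hcase
        have hx0 : (y + normm • d) ω = 0 := by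
          rw [hx ω, hω₀]; norm_num
        rw [hx0]
        simp [hy ω, abs_of_pos (hm ω)]
      · have h1 : (y + normm • d) ω - y ω = ((ε ω : ℝ) : ℂ) * y ω := by
          rw [hx ω]; push_cast; ring
        rw [h1, norm_mul, Complex.norm_real, Real.norm_eq_abs, habsε ω, one_mul, hy ω, habsx ω]
        rcases hε ω with h|h <;> rw [h] <;> norm_num
        · rw [show (2:ℝ) * m ω - m ω = m ω by ring, abs_of_pos (hm ω)]
        · rw [abs_of_pos (hm ω)]
    have hz₂ney : z₂ ≠ y := by
      intro h
      have h2 : -y ω₀ = y ω₀ := by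
        have := congrArg (fun v : EuclideanSpace ℂ (Fin N) => v ω₀) h
        rwa [hz₂coord ω₀, if_pos rfl] at this
      exact hyne ω₀ (by linear_combination (-(1:ℂ)/2) * h2)
    refine ⟨⟨y, z₂, hy_mem, hz₂_mem, fun h => hz₂ney h.symm⟩, ?_⟩
    rw [dirReach]
    have hset : {R : ℝ | 0 ≤ R ∧ projSet (magSet N m) (y + R • d) = {y}}
        = Set.Ico 0 normm := by
      ext R
      simp only [Set.mem_setOf_eq, Set.mem_Ico]
      constructor
      · rintro ⟨h0, hproj⟩
        refine ⟨h0, ?_⟩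
        by_contra hR
        push_neg at hR
        rcases eq_or_lt_of_le hR with heq|hlt
        · rw [← heq] at hproj
          rw [hproj] at hz₂_mem
          exact hz₂ney hz₂_mem
        · have hymem : y ∈ projSet (magSet N m) (y + R • d) := by
            rw [hproj]; rfl
          rw [S15.mem_projSet_iff hm] at hymem
          have hc := hymem.2 ω₀
          have h1 : (y + R • d) ω₀ - y ω₀ = ((R * ε ω₀ / normm : ℝ) : ℂ) * y ω₀ := by
            rw [hcoord R ω₀]; push_cast; ring
          have h2 : ‖(y + R • d) ω₀‖ = |1 + R * ε ω₀ / normm| * m ω₀ := by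
            rw [hcoord R ω₀, norm_mul, Complex.norm_real, Real.norm_eq_abs, hy ω₀]
          rw [h1, norm_mul, Complex.norm_real, Real.norm_eq_abs, hy ω₀, h2, hω₀] at hc
          set u := R / normm with hu
          have hu1 : 1 < u := (one_lt_div hρ).mpr hlt
          have e1 : |R * (-1) / normm| = u := by
            rw [show R * (-1) / normm = -u by rw [hu]; ring, abs_neg,
              abs_of_nonneg (by linarith : (0:ℝ) ≤ u)]
          have e2 : |1 + R * (-1) / normm| = u - 1 := by
            rw [show 1 + R * (-1) / normm = -(u - 1) by rw [hu]; ring, abs_neg,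
              abs_of_nonneg (by linarith : (0:ℝ) ≤ u - 1)]
          rw [e1, e2] at hc
          have e3 : |(u - 1) * m ω₀ - m ω₀| = |u - 2| * m ω₀ := by
            rw [show (u - 1) * m ω₀ - m ω₀ = (u - 2) * m ω₀ by ring, abs_mul,
              abs_of_pos (hm ω₀)]
          rw [e3] at hc
          have hcu : u = |u - 2| := mul_right_cancel₀ (hm ω₀).ne' hc
          rcases abs_cases (u - 2) with ⟨h4, _⟩ | ⟨h4, _⟩ <;> rw [h4] at hcu <;> linarith
      · rintro ⟨h0, hR⟩
        exact ⟨h0, part1 R h0 hR⟩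
    rw [hset, S15.sSup_image_Ico normm hρ]
end
end
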